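/- For all n ≥ 2, c_n^{(2)} = (H_n^2 + H_n^{(2)})/2, where H_n = Σ_{j=1}^n 1/j and H_n^{(2)} = Σ_{j=1}^n 1/j^2. -/

import Mathlib

/-- Roman harmonic number `c_n^{(k)}` as a rational number. -/
def romanHarmonic (n k : ℕ) : ℚ :=
  ∑ j ∈ Finset.Icc 1 n, (-1 : ℚ) ^ (j - 1) * (n.choose j) / (j : ℚ) ^ k

lemma rh_zero (n : ℕ) (hn : 1 ≤ n) : romanHarmonic n 0 = 1 := by
  have h := Int.alternating_sum_range_choose (n := n)
  rw [if_neg (by omega)] at h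
  have hq : ∑ i ∈ Finset.range (n + 1), (-1 : ℚ) ^ i * (n.choose i) = 0 := by
    exact_mod_cast h
  rw [Finset.sum_range_succ'] at hq
  simp only [Nat.choose_zero_right, pow_zero, Nat.cast_one, mul_one] at hq
  unfold romanHarmonic
  rw [← Finset.Ico_add_one_right_eq_Icc, Finset.sum_Ico_eq_sum_range]
  have : ∀ i ∈ Finset.range (n + 1 - 1),
      (-1 : ℚ) ^ (1 + i - 1) * (n.choose (1 + i)) / ((1 + i : ℕ) : ℚ) ^ 0
        = -((-1 : ℚ) ^ (i + 1) * (n.choose (i + 1))) := by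
    intro i _
    rw [show 1 + i - 1 = i by omega, show 1 + i = i + 1 from add_comm 1 i]
    simp only [pow_zero, div_one, pow_succ]
    ring
  rw [Finset.sum_congr rfl this, Finset.sum_neg_distrib]
  have : n + 1 - 1 = n := by omega
  rw [this]
  linarith [hq]

lemma rh_rec (n k : ℕ) :
    romanHarmonic (n + 1) (k + 1)
      = romanHarmonic n (k + 1) + romanHarmonic (n + 1) k / (n + 1) := by
  unfold romanHarmonic
  have hsub : Finset.Icc 1 n ⊆ Finset.Icc 1 (n + 1) := by
    apply Finset.Icc_subset_Icc_right; omega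
  have hext : ∑ j ∈ Finset.Icc 1 n, (-1 : ℚ) ^ (j - 1) * (n.choose j) / (j : ℚ) ^ (k + 1)
      = ∑ j ∈ Finset.Icc 1 (n + 1), (-1 : ℚ) ^ (j - 1) * (n.choose j) / (j : ℚ) ^ (k + 1) := by
    apply Finset.sum_subset hsub
    intro x hx hx'
    simp only [Finset.mem_Icc] at hx hx'
    have : x = n + 1 := by omega
    subst this
    simp [Nat.choose_succ_self]
  rw [hext]
  rw [Finset.sum_div, ← Finset.sum_add_distrib]
  apply Finset.sum_congr rfl
  intro j hj
  simp only [Finset.mem_Icc] at hj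
  obtain ⟨m, rfl⟩ : ∃ m, j = m + 1 := ⟨j - 1, by omega⟩
  have hnat : (n + 1) * n.choose m = (n.choose m + n.choose (m + 1)) * (m + 1) := by
    rw [← Nat.choose_succ_succ]
    exact Nat.add_one_mul_choose_eq n m
  have hcomb : ((n : ℚ) + 1) * (n.choose m : ℚ)
      = ((n.choose m : ℚ) + (n.choose (m + 1) : ℚ)) * ((m : ℚ) + 1) := by
    exact_mod_cast hnat
  have hchoose : (((n + 1).choose (m + 1) : ℕ) : ℚ)
      = (n.choose m : ℚ) + (n.choose (m + 1) : ℚ) := by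
    exact_mod_cast Nat.choose_succ_succ n m
  have hm' : ((m : ℚ) + 1) ≠ 0 := by positivity
  have hn1 : ((n : ℚ) + 1) ≠ 0 := by positivity
  have key : (n.choose m : ℚ) / ((m : ℚ) + 1)
      = ((n.choose m : ℚ) + (n.choose (m + 1) : ℚ)) / ((n : ℚ) + 1) := by
    rw [div_eq_div_iff hm' hn1]
    linear_combination hcomb
  simp only [Nat.add_sub_cancel]
  push_cast
  rw [hchoose, pow_succ]
  field_simp
  linear_combination hcomb

lemma rh_one (n : ℕ) (hn : 1 ≤ n) :
    romanHarmonic n 1 = ∑ j ∈ Finset.Icc 1 n, (1 : ℚ) / (j : ℚ) := by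
  induction n, hn using Nat.le_induction with
  | base => simp [romanHarmonic]
  | succ n hn ih =>
    have := rh_rec n 0
    rw [this, ih, rh_zero (n + 1) (by omega), Finset.sum_Icc_succ_top (by omega : 1 ≤ n + 1)]
    push_cast
    ring

theorem roman_harmonic_two (n : ℕ) (hn : 2 ≤ n) :
    romanHarmonic n 2 =
      ((∑ j ∈ Finset.Icc 1 n, (1 : ℚ) / (j : ℚ)) ^ 2 +
        ∑ j ∈ Finset.Icc 1 n, (1 : ℚ) / (j : ℚ) ^ 2) / 2 := by
  have key : ∀ m : ℕ, 1 ≤ m → romanHarmonic m 2 =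
      ((∑ j ∈ Finset.Icc 1 m, (1 : ℚ) / (j : ℚ)) ^ 2 +
        ∑ j ∈ Finset.Icc 1 m, (1 : ℚ) / (j : ℚ) ^ 2) / 2 := by
    intro m hm
    induction m, hm using Nat.le_induction with
    | base => simp [romanHarmonic]
    | succ m hm ih =>
      rw [rh_rec m 1, ih, rh_one (m + 1) (by omega),
        Finset.sum_Icc_succ_top (by omega : 1 ≤ m + 1),
        Finset.sum_Icc_succ_top (by omega : 1 ≤ m + 1)]
      have hm1 : ((m : ℚ) + 1) ≠ 0 := by positivity
      push_cast
      field_simp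
      ring
  exact key n (by omega)
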